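/- Let m = p^k for a prime p and k ≥ 1, and let T_f be an invertible linear cellular automaton on (ZMod p^k)^ℤ with local rule f(x_l,…,x_r) = Σ_{i=l}^{r} λ_i x_i (mod p^k) and unique permutative index j_p, with associated Laurent polynomial F(X) = Σ_{i=l}^{r} λ_i X^{-i}. If n = ℓ p^{k-1} + ℓ' with ℓ ∈ ℕ and 1 ≤ ℓ' < p^{k-1}, then the coefficient of X^{-i} in F(X)^n vanishes for every i outside the interval [ℓ p^{k-1} j_p + ℓ' l, ℓ p^{k-1} j_p + ℓ' r]; equivalently, the local rule of T_f^n depends only on the coordinates with indices in that interval. -/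

import Mathlib

open LaurentPolynomial

private lemma key_dvd (p : ℕ) (hp : p.Prime) (k m : ℕ) (hk : 1 ≤ k)
    (hm1 : 1 ≤ m) (hm2 : m ≤ p ^ (k - 1)) :
    p ^ k ∣ (p ^ (k - 1)).choose m * p ^ m := by
  set v := multiplicity p m with hv
  have hpv : p ^ v ∣ m := pow_multiplicity_dvd p m
  have hvm : v + 1 ≤ m := by
    have h1 : p ^ v ≤ m := Nat.le_of_dvd hm1 hpv
    have h2 : v < p ^ v := Nat.lt_pow_self hp.one_lt
    omega
  have hchoose : emultiplicity p ((p ^ (k - 1)).choose m) = ((k - 1) - v : ℕ) :=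
    Nat.Prime.emultiplicity_choose_prime_pow hp hm2 (by omega)
  have d1 : p ^ ((k - 1) - v) ∣ (p ^ (k - 1)).choose m := by
    rw [pow_dvd_iff_le_emultiplicity, hchoose]
  have d2 : p ^ (v + 1) ∣ p ^ m := pow_dvd_pow p hvm
  calc p ^ k ∣ p ^ ((k - 1) - v + (v + 1)) := pow_dvd_pow p (by omega)
    _ = p ^ ((k - 1) - v) * p ^ (v + 1) := pow_add p _ _
    _ ∣ _ := mul_dvd_mul d1 d2

private lemma support_bound {R : Type*} [CommRing R] (l r : ℤ) (g : ℤ → R) :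
    ∀ (m : ℕ) (x : ℤ),
      x ∈ (((∑ i ∈ Finset.Icc l r, C (g i) * T (-i)) ^ m :
        LaurentPolynomial R).coeff : ℤ →₀ R).support →
      -(m : ℤ) * r ≤ x ∧ x ≤ -(m : ℤ) * l := by
  classical
  intro m
  induction m with
  | zero =>
    intro x hx
    rw [pow_zero] at hx
    have h1 : (1 : LaurentPolynomial R).coeff = Finsupp.single 0 1 := by
      rw [AddMonoidAlgebra.one_def, AddMonoidAlgebra.coeff_single]
    rw [h1] at hx
    have := Finsupp.support_single_subset hx
    simp only [Finset.mem_singleton] at this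
    subst this
    simp
  | succ m ih =>
    intro x hx
    rw [pow_succ] at hx
    have hsub := AddMonoidAlgebra.support_coeff_mul_subset
      ((∑ i ∈ Finset.Icc l r, C (g i) * T (-i)) ^ m : LaurentPolynomial R)
      (∑ i ∈ Finset.Icc l r, C (g i) * T (-i))
    have hx' := hsub hx
    rw [Finset.mem_add] at hx'
    obtain ⟨y, hy, z, hz, hyz⟩ := hx'
    have hy' := ih y hy
    -- z is in the support of the sum of singles
    have hz' : -r ≤ z ∧ z ≤ -l := by
      simp only [← single_eq_C_mul_T, AddMonoidAlgebra.coeff_sum, AddMonoidAlgebra.coeff_single] at hz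
      obtain ⟨c, hc, hzc⟩ := Finsupp.mem_support_finset_sum z hz
      have := Finsupp.support_single_subset hzc
      simp only [Finset.mem_singleton] at this
      subst this
      rw [Finset.mem_Icc] at hc
      omega
    subst hyz
    push_cast
    constructor <;> nlinarith [hy'.1, hy'.2, hz'.1, hz'.2]

/-- Coefficient bounds for powers of the Laurent polynomial of an invertible linear
cellular automaton over `ZMod p^k`: if `n = ℓ p^{k-1} + ℓ'` with `1 ≤ ℓ' < p^{k-1}`,
then the coefficient of `X^{-i}` in `F(X)^n` (the value at `-i` of the underlying
finitely supported function) vanishes for every `i` outside the interval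
`[ℓ p^{k-1} j_p + ℓ' l, ℓ p^{k-1} j_p + ℓ' r]`. -/
theorem laurent_pow_coeff_support
    (p k : ℕ) (hp : p.Prime) (hk : 1 ≤ k) (l r jp : ℤ) (hlr : l ≤ r)
    (lam : ℤ → ZMod (p ^ k))
    (hjp : l ≤ jp ∧ jp ≤ r ∧ ¬ (p : ℕ) ∣ (lam jp).val)
    (huniq : ∀ j : ℤ, l ≤ j → j ≤ r → ¬ (p : ℕ) ∣ (lam j).val → j = jp)
    (ℓ ℓ' n : ℕ) (hℓ'₁ : 1 ≤ ℓ') (hℓ'₂ : ℓ' < p ^ (k - 1))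
    (hn : n = ℓ * p ^ (k - 1) + ℓ') :
    ∀ i : ℤ,
      (i < ((ℓ * p ^ (k - 1) : ℕ) : ℤ) * jp + (ℓ' : ℤ) * l ∨
        ((ℓ * p ^ (k - 1) : ℕ) : ℤ) * jp + (ℓ' : ℤ) * r < i) →
      (((∑ i ∈ Finset.Icc l r, C (lam i) * T (-i)) ^ n :
          LaurentPolynomial (ZMod (p ^ k))).coeff : ℤ →₀ ZMod (p ^ k)) (-i) = 0 := by
  classical
  haveI : NeZero (p ^ k) := ⟨pow_ne_zero k hp.pos.ne'⟩
  obtain ⟨hjl, hjr, hjv⟩ := hjp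
  set N := p ^ (k - 1) with hN
  set F : LaurentPolynomial (ZMod (p ^ k)) := ∑ i ∈ Finset.Icc l r, C (lam i) * T (-i) with hF
  set c : ℤ → ZMod (p ^ k) := fun i => (((lam i).val / p : ℕ) : ZMod (p ^ k)) with hc
  set G : LaurentPolynomial (ZMod (p ^ k)) := ∑ i ∈ (Finset.Icc l r).erase jp, C (c i) * T (-i) with hG
  have hmem : jp ∈ Finset.Icc l r := Finset.mem_Icc.2 ⟨hjl, hjr⟩
  -- split off the jp term
  have hsplit : F = C (lam jp) * T (-jp) + C (p : ZMod (p ^ k)) * G := by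
    rw [hF, ← Finset.add_sum_erase _ _ hmem, hG, Finset.mul_sum]
    congr 1
    refine Finset.sum_congr rfl fun i hi => ?_
    obtain ⟨hne, hi'⟩ := Finset.mem_erase.mp hi
    rw [Finset.mem_Icc] at hi'
    have hdvd : (p : ℕ) ∣ (lam i).val := by
      by_contra h
      exact hne (huniq i hi'.1 hi'.2 h)
    have hlam : lam i = (p : ZMod (p ^ k)) * c i := by
      have h1 : ((lam i).val : ZMod (p ^ k)) = lam i := ZMod.natCast_rightInverse (lam i)
      have h2 : (p * ((lam i).val / p) : ℕ) = (lam i).val := Nat.mul_div_cancel' hdvd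
      calc lam i = (((lam i).val : ℕ) : ZMod (p ^ k)) := h1.symm
        _ = ((p * ((lam i).val / p) : ℕ) : ZMod (p ^ k)) := by rw [h2]
        _ = (p : ZMod (p ^ k)) * c i := by rw [hc]; push_cast; ring
    rw [hlam, map_mul, mul_assoc]
  -- the p^{k-1}-th power collapses to a single monomial
  have hFpow : F ^ N = C ((lam jp) ^ N) * T ((N : ℤ) * (-jp)) := by
    rw [hsplit, add_pow, Finset.sum_eq_single N]
    · rw [Nat.sub_self, pow_zero, Nat.choose_self, Nat.cast_one, mul_one, mul_one,
        mul_pow, ← map_pow, T_pow]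
    · intro j hj hjne
      have hjle : j ≤ N := by
        rw [Finset.mem_range] at hj; omega
      have hdvd0 : p ^ k ∣ N.choose j * p ^ (N - j) := by
        have h1 : N.choose j = N.choose (N - j) := (Nat.choose_symm hjle).symm
        rw [h1]
        exact key_dvd p hp k (N - j) hk (by omega) (by omega)
      have h0 : ((N.choose j * p ^ (N - j) : ℕ) : ZMod (p ^ k)) = 0 :=
        (ZMod.natCast_eq_zero_iff _ _).2 hdvd0
      have hz : (C ((p : ZMod (p ^ k))) : LaurentPolynomial (ZMod (p ^ k))) ^ (N - j) *
          ((N.choose j : ℕ) : LaurentPolynomial (ZMod (p ^ k))) = 0 := by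
        rw [← map_pow, ← map_natCast (C : ZMod (p ^ k) →+* LaurentPolynomial (ZMod (p ^ k))) (N.choose j),
          ← map_mul]
        have : ((p : ZMod (p ^ k))) ^ (N - j) * ((N.choose j : ℕ) : ZMod (p ^ k)) = 0 := by
          push_cast at h0
          rw [mul_comm]
          convert h0 using 2
        rw [this, map_zero]
      calc (C (lam jp) * T (-jp)) ^ j * (C ((p : ZMod (p ^ k))) * G) ^ (N - j) *
            ((N.choose j : ℕ) : LaurentPolynomial (ZMod (p ^ k)))
          = (C (lam jp) * T (-jp)) ^ j * G ^ (N - j) *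
            ((C ((p : ZMod (p ^ k))) : LaurentPolynomial (ZMod (p ^ k))) ^ (N - j) *
              ((N.choose j : ℕ) : LaurentPolynomial (ZMod (p ^ k)))) := by
            rw [mul_pow]; ring
        _ = 0 := by rw [hz, mul_zero]
    · intro h
      exact (h (Finset.self_mem_range_succ N)).elim
  -- now decompose F^n
  intro i hi
  have hfn : F ^ n = C ((lam jp) ^ (N * ℓ)) * T ((ℓ : ℤ) * ((N : ℤ) * (-jp))) * F ^ ℓ' := by
    rw [hn, pow_add, mul_comm ℓ N, pow_mul, hFpow, mul_pow, ← map_pow, T_pow, ← pow_mul]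
  rw [hfn, ← single_eq_C_mul_T, AddMonoidAlgebra.coeff_single_mul_apply]
  have hzero : (F ^ ℓ' : LaurentPolynomial (ZMod (p ^ k))).coeff (-((ℓ : ℤ) * ((N : ℤ) * (-jp))) + -i) = 0 := by
    by_contra h
    have hsupp := support_bound l r lam ℓ' _ (Finsupp.mem_support_iff.2 h)
    push_cast at hi
    rcases hi with hi | hi
    · nlinarith [hsupp.2]
    · nlinarith [hsupp.1]
  rw [hzero, mul_zero]
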